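/- arXiv:0801.4544 — 4 statements merged into one kernel-verified Lean document; each statement's English description precedes it below -/
import Mathlib

section
/- For every continuous nondecreasing function F : ℝ → ℝ, every rate R ∈ ℝ, every input pmf p_X and every channel p_{Y|X}, the modified random-coding exponent is related to the sphere-packing exponent by E_{r,F}(R, p_X, p_{Y|X}) = inf_{R' ∈ ℝ} [ E_sp(R', p_X, p_{Y|X}) + F(R' − R) ] (with the convention that the bracketed expression is +∞ whenever E_sp(R', p_X, p_{Y|X}) = +∞). -/
open scoped BigOperators

section Defs

variable {𝒳 𝒴 : Type*} [Fintype 𝒳] [Fintype 𝒴]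

/-- `p` is a probability mass function on the finite alphabet `𝒳`. -/
def IsPMF (p : 𝒳 → ℝ) : Prop := (∀ x, 0 ≤ p x) ∧ ∑ x, p x = 1

/-- A channel assigns to each input letter a pmf on `𝒴`. -/
def IsChannel (W : 𝒳 → 𝒴 → ℝ) : Prop := ∀ x, IsPMF (W x)

/-- Conditional Kullback–Leibler divergence `D(q ‖ W | pX)`, base-2 logarithms. -/
noncomputable def condKL (pX : 𝒳 → ℝ) (q W : 𝒳 → 𝒴 → ℝ) : ℝ :=
  ∑ x, ∑ y, pX x * q x y * Real.logb 2 (q x y / W x y)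

/-- Mutual information `I(pX, q)` of the joint pmf `(x, y) ↦ pX x * q x y`. -/
noncomputable def mutInfo (pX : 𝒳 → ℝ) (q : 𝒳 → 𝒴 → ℝ) : ℝ :=
  ∑ x, ∑ y, pX x * q x y * Real.logb 2 (q x y / ∑ x', pX x' * q x' y)

/-- Modified random-coding exponent `E_{r,F}(R, pX, W)`. -/
noncomputable def ErF (F : ℝ → ℝ) (R : ℝ) (pX : 𝒳 → ℝ) (W : 𝒳 → 𝒴 → ℝ) : ℝ :=
  sInf {v : ℝ | ∃ q : 𝒳 → 𝒴 → ℝ, IsChannel q ∧ v = condKL pX q W + F (mutInfo pX q - R)}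

/-- Sphere-packing exponent `E_sp(R, pX, W)`, with value `+∞` if no conditional pmf
satisfies the mutual-information constraint. -/
noncomputable def EspE (R : ℝ) (pX : 𝒳 → ℝ) (W : 𝒳 → 𝒴 → ℝ) : EReal :=
  sInf {v : EReal | ∃ q : 𝒳 → 𝒴 → ℝ,
    IsChannel q ∧ mutInfo pX q ≤ R ∧ v = (condKL pX q W : EReal)}

/-- `E_{r,F}` for a class of channels (infimum over the class). -/
noncomputable def ErFW (F : ℝ → ℝ) (R : ℝ) (pX : 𝒳 → ℝ) (𝒲 : Set (𝒳 → 𝒴 → ℝ)) : ℝ :=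
  sInf {v : ℝ | ∃ p ∈ 𝒲, v = ErF F R pX p}

/-- `E_sp` for a class of channels (infimum over the class). -/
noncomputable def EspEW (R : ℝ) (pX : 𝒳 → ℝ) (𝒲 : Set (𝒳 → 𝒴 → ℝ)) : EReal :=
  sInf {v : EReal | ∃ p ∈ 𝒲, v = EspE R pX p}

end Defs


private lemma term_bound {p a w : ℝ} (hp : 0 ≤ p) (ha : 0 ≤ a) (hw : 0 ≤ w) :
    -(p * w) / Real.log 2 ≤ p * a * Real.logb 2 (a / w) := by
  have hlog2 : 0 < Real.log 2 := Real.log_pos one_lt_two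
  rcases eq_or_lt_of_le hw with h0 | hw
  · simp [← h0, Real.logb, div_nonneg, hp]
  rw [Real.logb, div_le_iff₀ hlog2]
  have key : -w ≤ a * Real.log (a / w) := by
    rcases eq_or_lt_of_le ha with h0 | ha
    · rw [← h0]; simp; positivity
    have h1 : Real.log (w / a) ≤ w / a - 1 := Real.log_le_sub_one_of_pos (by positivity)
    have h2 : Real.log (w / a) = -Real.log (a / w) := by
      rw [← Real.log_inv]; congr 1; field_simp
    rw [h2] at h1
    have := mul_le_mul_of_nonneg_left h1 ha.le
    have hwa : a * (w / a - 1) = w - a := by field_simp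
    nlinarith
  calc -(p * w) = p * (-w) := by ring
    _ ≤ p * (a * Real.log (a / w)) := mul_le_mul_of_nonneg_left key hp
    _ = p * a * (Real.log (a / w) / Real.log 2) * Real.log 2 := by field_simp

private lemma condKL_ge {𝒳 𝒴 : Type*} [Fintype 𝒳] [Fintype 𝒴]
    {pX : 𝒳 → ℝ} (hpX : IsPMF pX) {q W : 𝒳 → 𝒴 → ℝ} (hq : IsChannel q)
    (hW : IsChannel W) : -(Real.log 2)⁻¹ ≤ condKL pX q W := by
  have hcalc : ∑ x, ∑ y, -(pX x * W x y) / Real.log 2 = -(Real.log 2)⁻¹ := by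
    have : ∀ x : 𝒳, ∑ y, -(pX x * W x y) / Real.log 2 = -pX x / Real.log 2 := by
      intro x
      rw [← Finset.sum_div, Finset.sum_neg_distrib, ← Finset.mul_sum, (hW x).2, mul_one]
    rw [Finset.sum_congr rfl fun x _ => this x, ← Finset.sum_div,
      Finset.sum_neg_distrib, hpX.2]
    simp [div_eq_mul_inv]
  rw [← hcalc]
  exact Finset.sum_le_sum fun x _ => Finset.sum_le_sum fun y _ =>
    term_bound (hpX.1 x) ((hq x).1 y) ((hW x).1 y)

private lemma marginal_channel {𝒳 𝒴 : Type*} [Fintype 𝒳] [Fintype 𝒴]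
    {pX : 𝒳 → ℝ} (hpX : IsPMF pX) {q : 𝒳 → 𝒴 → ℝ} (hq : IsChannel q) :
    IsChannel (fun (_ : 𝒳) (y : 𝒴) => ∑ x', pX x' * q x' y) := by
  intro x
  constructor
  · intro y
    exact Finset.sum_nonneg fun x' _ => mul_nonneg (hpX.1 x') ((hq x').1 y)
  · rw [Finset.sum_comm]
    rw [Finset.sum_congr rfl fun x' _ => (Finset.mul_sum _ _ _).symm]
    rw [Finset.sum_congr rfl fun x' _ => by rw [(hq x').2, mul_one]]
    exact hpX.2

private lemma mutInfo_ge {𝒳 𝒴 : Type*} [Fintype 𝒳] [Fintype 𝒴]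
    {pX : 𝒳 → ℝ} (hpX : IsPMF pX) {q : 𝒳 → 𝒴 → ℝ} (hq : IsChannel q) :
    -(Real.log 2)⁻¹ ≤ mutInfo pX q := by
  have : mutInfo pX q = condKL pX q (fun (_ : 𝒳) (y : 𝒴) => ∑ x', pX x' * q x' y) := rfl
  rw [this]
  exact condKL_ge hpX hq (marginal_channel hpX hq)

/-- For every continuous nondecreasing `F`, every rate `R`, input pmf `pX`
and channel `W`, `E_{r,F}(R,pX,W) = inf_{R'} [E_sp(R',pX,W) + F(R'-R)]`, where the
bracketed expression is `+∞` whenever `E_sp(R',pX,W) = +∞` (computation in `EReal`). -/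
theorem ErF_eq_inf_Esp {𝒳 𝒴 : Type*} [Fintype 𝒳] [Fintype 𝒴]
    (pX : 𝒳 → ℝ) (hpX : IsPMF pX) (W : 𝒳 → 𝒴 → ℝ) (hW : IsChannel W)
    (F : ℝ → ℝ) (hFcont : Continuous F) (hFmono : Monotone F) (R : ℝ) :
    (ErF F R pX W : EReal) = ⨅ R' : ℝ, (EspE R' pX W + (F (R' - R) : EReal)) := by
  set S : Set ℝ :=
    {v : ℝ | ∃ q : 𝒳 → 𝒴 → ℝ, IsChannel q ∧ v = condKL pX q W + F (mutInfo pX q - R)}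
    with hS
  have hErF : ErF F R pX W = sInf S := rfl
  have hSne : S.Nonempty := ⟨_, W, hW, rfl⟩
  have hSbd : BddBelow S := by
    refine ⟨-(Real.log 2)⁻¹ + F (-(Real.log 2)⁻¹ - R), ?_⟩
    rintro v ⟨q, hq, rfl⟩
    have h1 : -(Real.log 2)⁻¹ ≤ condKL pX q W := condKL_ge hpX hq hW
    have h2 : F (-(Real.log 2)⁻¹ - R) ≤ F (mutInfo pX q - R) :=
      hFmono (by have := mutInfo_ge hpX hq; linarith)
    linarith
  apply le_antisymm
  · refine le_iInf fun R' => ?_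
    set c' : ℝ := F (R' - R) with hc'
    have h1 : ((ErF F R pX W - c' : ℝ) : EReal) ≤ EspE R' pX W := by
      refine le_sInf ?_
      rintro v ⟨q', hq', hle, rfl⟩
      rw [EReal.coe_le_coe_iff]
      have hmem : condKL pX q' W + F (mutInfo pX q' - R) ∈ S := ⟨q', hq', rfl⟩
      have : ErF F R pX W ≤ condKL pX q' W + c' := by
        refine (hErF ▸ csInf_le hSbd hmem).trans ?_
        have := hFmono (sub_le_sub_right hle R)
        linarith
      linarith
    calc (ErF F R pX W : EReal)
        = ((ErF F R pX W - c' : ℝ) : EReal) + (c' : EReal) := by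
          rw [← EReal.coe_add]; norm_num
      _ ≤ EspE R' pX W + (c' : EReal) := add_le_add_left h1 _
  · set b : EReal := ⨅ R' : ℝ, (EspE R' pX W + (F (R' - R) : EReal)) with hb
    have hbv : ∀ v ∈ S, b ≤ (v : EReal) := by
      rintro v ⟨q, hq, rfl⟩
      calc b ≤ EspE (mutInfo pX q) pX W + (F (mutInfo pX q - R) : EReal) :=
          iInf_le _ (mutInfo pX q)
        _ ≤ (condKL pX q W : EReal) + (F (mutInfo pX q - R) : EReal) := by
          have hm : (condKL pX q W : EReal) ∈ {v : EReal | ∃ q' : 𝒳 → 𝒴 → ℝ,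
              IsChannel q' ∧ mutInfo pX q' ≤ mutInfo pX q ∧
              v = (condKL pX q' W : EReal)} := ⟨q, hq, le_refl _, rfl⟩
          exact add_le_add_left (sInf_le hm) _
        _ = ((condKL pX q W + F (mutInfo pX q - R) : ℝ) : EReal) :=
          (EReal.coe_add _ _).symm
    rcases eq_or_ne b ⊥ with h | hbot
    · rw [h]; exact bot_le
    have htop : b ≠ ⊤ := by
      obtain ⟨v, hv⟩ := hSne
      exact ne_top_of_le_ne_top (EReal.coe_ne_top v) (hbv v hv)
    have hcoe : b = ((b.toReal : ℝ) : EReal) := (EReal.coe_toReal htop hbot).symm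
    rw [hcoe, hErF, EReal.coe_le_coe_iff]
    refine le_csInf hSne fun v hv => ?_
    have := hbv v hv
    rw [hcoe, EReal.coe_le_coe_iff] at this
    exact this
end

section
/- Let W be a nonempty compact set of channels each of which has strictly positive transition probabilities (so that E_sp(R', p_X, W) is finite for all R' ≥ 0, and the function R' ↦ E_sp(R', p_X, W) is nonincreasing and continuous). Fix R ≥ 0 and define F_{R,p_X,W}(t) = E_sp(R, p_X, W) − E_sp(R+t, p_X, W) for t ≥ −R. Then F_{R,p_X,W} is nondecreasing and continuous, and E_{r,F_{R,p_X,W}}(R, p_X, W) = E_sp(R, p_X, W). -/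
open scoped BigOperators

section Aux

variable {𝒳 𝒴 : Type*} [Fintype 𝒳] [Fintype 𝒴]

lemma gibbs_aux {𝒴 : Type*} [Fintype 𝒴] (q p : 𝒴 → ℝ) (hq0 : ∀ y, 0 ≤ q y)
    (hq1 : ∑ y, q y = 1) (hp : ∀ y, 0 < p y) (hp1 : ∑ y, p y = 1) :
    0 ≤ ∑ y, q y * Real.logb 2 (q y / p y) := by
  have key : ∑ y, q y * Real.log (p y / q y) ≤ 0 := by
    calc ∑ y, q y * Real.log (p y / q y) ≤ ∑ y, (p y - q y) := by
          apply Finset.sum_le_sum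
          intro y _
          rcases eq_or_lt_of_le (hq0 y) with h | h
          · simp [← h, le_of_lt (hp y)]
          · have hl := Real.log_le_sub_one_of_pos (div_pos (hp y) h)
            have h2 : q y * Real.log (p y / q y) ≤ q y * (p y / q y - 1) := by nlinarith
            calc q y * Real.log (p y / q y) ≤ q y * (p y / q y - 1) := h2
              _ = p y - q y := by field_simp
      _ = 0 := by rw [Finset.sum_sub_distrib, hq1, hp1]; ring
  have heq : ∑ y, q y * Real.log (q y / p y) = -∑ y, q y * Real.log (p y / q y) := by
    rw [← Finset.sum_neg_distrib]
    apply Finset.sum_congr rfl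
    intro y _
    rcases eq_or_lt_of_le (hq0 y) with h | h
    · simp [← h]
    · have hinv : q y / p y = (p y / q y)⁻¹ := by field_simp
      rw [hinv, Real.log_inv]; ring
  have hnum : 0 ≤ ∑ y, q y * Real.log (q y / p y) := by linarith
  have h2 : (0:ℝ) < Real.log 2 := Real.log_pos one_lt_two
  have hrw : ∑ y, q y * Real.logb 2 (q y / p y)
      = (∑ y, q y * Real.log (q y / p y)) / Real.log 2 := by
    rw [Finset.sum_div]
    apply Finset.sum_congr rfl
    intro y _
    simp [Real.logb, mul_div_assoc]
  rw [hrw]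
  positivity

lemma condKL_nonneg (pX : 𝒳 → ℝ) (hpX : IsPMF pX) (q p : 𝒳 → 𝒴 → ℝ)
    (hq : IsChannel q) (hp : IsChannel p) (hppos : ∀ x y, 0 < p x y) :
    0 ≤ condKL pX q p := by
  apply Finset.sum_nonneg
  intro x _
  have hx : 0 ≤ ∑ y, q x y * Real.logb 2 (q x y / p x y) :=
    gibbs_aux (q x) (p x) (hq x).1 (hq x).2 (hppos x) (hp x).2
  have : ∑ y, pX x * q x y * Real.logb 2 (q x y / p x y)
      = pX x * ∑ y, q x y * Real.logb 2 (q x y / p x y) := by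
    rw [Finset.mul_sum]; apply Finset.sum_congr rfl; intro y _; ring
  rw [this]
  exact mul_nonneg (hpX.1 x) hx

lemma condKL_self (pX : 𝒳 → ℝ) (p : 𝒳 → 𝒴 → ℝ) (hppos : ∀ x y, 0 < p x y) :
    condKL pX p p = 0 := by
  unfold condKL
  apply Finset.sum_eq_zero
  intro x _
  apply Finset.sum_eq_zero
  intro y _
  rw [div_self (ne_of_gt (hppos x y))]
  simp

lemma EspE_nonneg (pX : 𝒳 → ℝ) (hpX : IsPMF pX) (p : 𝒳 → 𝒴 → ℝ)
    (hp : IsChannel p) (hppos : ∀ x y, 0 < p x y) (R' : ℝ) :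
    (0 : EReal) ≤ EspE R' pX p := by
  apply le_sInf
  rintro v ⟨q, hq, _, rfl⟩
  exact_mod_cast condKL_nonneg pX hpX q p hq hp hppos

lemma EspEW_nonneg (pX : 𝒳 → ℝ) (hpX : IsPMF pX) (𝒲 : Set (𝒳 → 𝒴 → ℝ))
    (h𝒲ch : ∀ p ∈ 𝒲, IsChannel p) (h𝒲pos : ∀ p ∈ 𝒲, ∀ x y, 0 < p x y) (R' : ℝ) :
    (0 : EReal) ≤ EspEW R' pX 𝒲 := by
  apply le_sInf
  rintro v ⟨p, hp, rfl⟩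
  exact EspE_nonneg pX hpX p (h𝒲ch p hp) (h𝒲pos p hp) R'

lemma EspEW_le_condKL (pX : 𝒳 → ℝ) (𝒲 : Set (𝒳 → 𝒴 → ℝ))
    (p : 𝒳 → 𝒴 → ℝ) (hp : p ∈ 𝒲) (q : 𝒳 → 𝒴 → ℝ) (hq : IsChannel q) :
    EspEW (mutInfo pX q) pX 𝒲 ≤ (condKL pX q p : EReal) := by
  have h1 : EspEW (mutInfo pX q) pX 𝒲 ≤ EspE (mutInfo pX q) pX p :=
    sInf_le ⟨p, hp, rfl⟩
  have h2 : EspE (mutInfo pX q) pX p ≤ (condKL pX q p : EReal) :=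
    sInf_le ⟨q, hq, le_refl _, rfl⟩
  exact h1.trans h2

lemma EspEW_toReal_le_condKL (pX : 𝒳 → ℝ) (hpX : IsPMF pX) (𝒲 : Set (𝒳 → 𝒴 → ℝ))
    (h𝒲ch : ∀ p ∈ 𝒲, IsChannel p) (h𝒲pos : ∀ p ∈ 𝒲, ∀ x y, 0 < p x y)
    (p : 𝒳 → 𝒴 → ℝ) (hp : p ∈ 𝒲) (q : 𝒳 → 𝒴 → ℝ) (hq : IsChannel q) :
    (EspEW (mutInfo pX q) pX 𝒲).toReal ≤ condKL pX q p := by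
  have h0 := EspEW_nonneg pX hpX 𝒲 h𝒲ch h𝒲pos (mutInfo pX q)
  have hle := EspEW_le_condKL pX 𝒲 p hp q hq
  have hbot : EspEW (mutInfo pX q) pX 𝒲 ≠ ⊥ := by
    intro h; rw [h] at h0; exact absurd h0 (by simp)
  have := EReal.toReal_le_toReal hle hbot (EReal.coe_ne_top _)
  simpa using this

lemma ereal_toReal_nonneg {a : EReal} (h : 0 ≤ a) : 0 ≤ a.toReal := by
  rcases eq_or_ne a ⊤ with rfl | ha
  · simp
  · have := EReal.toReal_le_toReal h (by simp) ha
    simpa using this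

end Aux

/-- For a nonempty compact class `𝒲` of everywhere-positive channels
(so that `E_sp(R',pX,𝒲)` is finite for `R' ≥ 0`, nonincreasing and continuous), and
`R ≥ 0`, the function `F_{R,pX,𝒲}(t) = E_sp(R,pX,𝒲) - E_sp(R+t,pX,𝒲)` is nondecreasing
and continuous on `t ≥ -R`, and `E_{r,F_{R,pX,𝒲}}(R,pX,𝒲) = E_sp(R,pX,𝒲)`. -/
theorem FR_props_and_ErF_eq_Esp {𝒳 𝒴 : Type*} [Fintype 𝒳] [Fintype 𝒴]
    (pX : 𝒳 → ℝ) (hpX : IsPMF pX)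
    (𝒲 : Set (𝒳 → 𝒴 → ℝ)) (h𝒲ne : 𝒲.Nonempty) (h𝒲cpt : IsCompact 𝒲)
    (h𝒲ch : ∀ p ∈ 𝒲, IsChannel p) (h𝒲pos : ∀ p ∈ 𝒲, ∀ x y, 0 < p x y)
    (hfin : ∀ R' : ℝ, 0 ≤ R' → EspEW R' pX 𝒲 ≠ ⊤ ∧ EspEW R' pX 𝒲 ≠ ⊥)
    (hanti : AntitoneOn (fun R' : ℝ => (EspEW R' pX 𝒲).toReal) (Set.Ici 0))
    (hcont : ContinuousOn (fun R' : ℝ => (EspEW R' pX 𝒲).toReal) (Set.Ici 0))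
    (R : ℝ) (hR : 0 ≤ R) :
    MonotoneOn
        (fun t : ℝ => (EspEW R pX 𝒲).toReal - (EspEW (R + t) pX 𝒲).toReal)
        (Set.Ici (-R))
      ∧ ContinuousOn
        (fun t : ℝ => (EspEW R pX 𝒲).toReal - (EspEW (R + t) pX 𝒲).toReal)
        (Set.Ici (-R))
      ∧ ErFW (fun t : ℝ => (EspEW R pX 𝒲).toReal - (EspEW (R + t) pX 𝒲).toReal) R pX 𝒲
          = (EspEW R pX 𝒲).toReal := by
  set E := (EspEW R pX 𝒲).toReal with hE
  set F : ℝ → ℝ := fun t : ℝ => E - (EspEW (R + t) pX 𝒲).toReal with hF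
  refine ⟨?_, ?_, ?_⟩
  · intro a ha b hb hab
    have h1 : (EspEW (R + b) pX 𝒲).toReal ≤ (EspEW (R + a) pX 𝒲).toReal := by
      apply hanti (by simp only [Set.mem_Ici] at ha ⊢; linarith)
        (by simp only [Set.mem_Ici] at hb ⊢; linarith) (by linarith)
    show F a ≤ F b
    simp only [hF]
    linarith
  · apply ContinuousOn.sub continuousOn_const
    apply hcont.comp ((continuous_const.add continuous_id).continuousOn)
    intro t ht
    simp only [Set.mem_Ici, id_eq, Pi.add_apply] at ht ⊢
    linarith
  · -- main equality
    have hFval : ∀ q : 𝒳 → 𝒴 → ℝ,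
        F (mutInfo pX q - R) = E - (EspEW (mutInfo pX q) pX 𝒲).toReal := by
      intro q
      have : R + (mutInfo pX q - R) = mutInfo pX q := by ring
      simp only [hF, this]
    have hErF : ∀ p ∈ 𝒲, ErF F R pX p = E := by
      intro p hp
      have hlb : ∀ v ∈ {v : ℝ | ∃ q : 𝒳 → 𝒴 → ℝ,
          IsChannel q ∧ v = condKL pX q p + F (mutInfo pX q - R)}, E ≤ v := by
        rintro v ⟨q, hq, rfl⟩
        rw [hFval q]
        have h1 := EspEW_toReal_le_condKL pX hpX 𝒲 h𝒲ch h𝒲pos p hp q hq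
        linarith
      have hv0mem : condKL pX p p + F (mutInfo pX p - R) ∈ {v : ℝ | ∃ q : 𝒳 → 𝒴 → ℝ,
          IsChannel q ∧ v = condKL pX q p + F (mutInfo pX q - R)} :=
        ⟨p, h𝒲ch p hp, rfl⟩
      have hv0le : condKL pX p p + F (mutInfo pX p - R) ≤ E := by
        rw [condKL_self pX p (h𝒲pos p hp), hFval p]
        have h0 : 0 ≤ (EspEW (mutInfo pX p) pX 𝒲).toReal :=
          ereal_toReal_nonneg (EspEW_nonneg pX hpX 𝒲 h𝒲ch h𝒲pos _)
        linarith
      apply le_antisymm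
      · exact le_trans (csInf_le ⟨E, hlb⟩ hv0mem) hv0le
      · exact le_csInf ⟨_, hv0mem⟩ hlb
    have hset : {v : ℝ | ∃ p ∈ 𝒲, v = ErF F R pX p} = {E} := by
      ext v
      constructor
      · rintro ⟨p, hp, rfl⟩
        exact hErF p hp
      · rintro rfl
        obtain ⟨p, hp⟩ := h𝒲ne
        exact ⟨p, hp, (hErF p hp).symm⟩
    show sInf {v : ℝ | ∃ p ∈ 𝒲, v = ErF F R pX p} = E
    rw [hset, csInf_singleton]
end

section
/- Let W be a nonempty compact set of channels, p_X an input pmf, R ∈ ℝ and α ∈ ℝ, and define F^{L*}(t) = α − E_sp(R+t, p_X, W) (interpreted as −∞ when E_sp(R+t, p_X, W) = +∞). Then for every continuous nondecreasing F : ℝ → ℝ, one has E_{r,F}(R, p_X, W) ≥ α if and only if F(t) ≥ F^{L*}(t) for every t ∈ ℝ. In other words, the feasible set {F : E_{r,F}(R, p_X, W) ≥ α} consists exactly of those continuous nondecreasing F dominating F^{L*} pointwise. -/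
open scoped BigOperators

lemma term_lb {a q w : ℝ} (ha : 0 ≤ a) (hq0 : 0 ≤ q)
    (hw0 : 0 ≤ w) (hw1 : w ≤ 1) :
    -2 * a ≤ a * q * Real.logb 2 (q / w) := by
  rcases eq_or_lt_of_le hw0 with hw | hw
  · rw [← hw, div_zero, Real.logb_zero, mul_zero]; nlinarith
  rcases eq_or_lt_of_le hq0 with hq | hq
  · rw [← hq, mul_zero, zero_mul]; nlinarith
  have h1 : q ≤ q / w := by
    rw [le_div_iff₀ hw]; nlinarith
  have h2 : Real.logb 2 q ≤ Real.logb 2 (q / w) :=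
    Real.logb_le_logb_of_le one_lt_two hq h1
  have h3 : -1 ≤ q * Real.log q := by
    have hh := Real.log_le_sub_one_of_pos (show (0:ℝ) < q⁻¹ by positivity)
    rw [Real.log_inv] at hh
    have := mul_le_mul_of_nonneg_left hh (le_of_lt hq)
    have hqi : q * q⁻¹ = 1 := mul_inv_cancel₀ (ne_of_gt hq)
    nlinarith
  have hlog2 : (0.6931471803 : ℝ) < Real.log 2 := Real.log_two_gt_d9
  have h4 : -2 ≤ q * Real.logb 2 q := by
    rw [Real.logb, mul_div_assoc', le_div_iff₀ (by linarith : (0:ℝ) < Real.log 2)]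
    nlinarith
  calc -2 * a = a * (-2) := by ring
    _ ≤ a * (q * Real.logb 2 q) := mul_le_mul_of_nonneg_left h4 ha
    _ = a * q * Real.logb 2 q := by ring
    _ ≤ a * q * Real.logb 2 (q / w) :=
        mul_le_mul_of_nonneg_left h2 (by positivity)

lemma entry_le_one {𝒴 : Type*} [Fintype 𝒴] {p : 𝒴 → ℝ} (hp : IsPMF p) (y : 𝒴) :
    p y ≤ 1 :=
  hp.2 ▸ Finset.single_le_sum (fun i _ => hp.1 i) (Finset.mem_univ y)

section Bounds
variable {𝒳 𝒴 : Type*} [Fintype 𝒳] [Fintype 𝒴]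

lemma double_sum_const (pX : 𝒳 → ℝ) (hp : IsPMF pX) :
    ∑ x : 𝒳, ∑ _y : 𝒴, (-2 * pX x) = -(2 * Fintype.card 𝒴) := by
  simp only [Finset.sum_const, Finset.card_univ, nsmul_eq_mul]
  rw [← Finset.mul_sum]
  have : ∑ x : 𝒳, (-2 * pX x) = -2 := by
    rw [← Finset.mul_sum, hp.2]; ring
  rw [this]; ring

lemma condKL_lb (pX : 𝒳 → ℝ) (q W : 𝒳 → 𝒴 → ℝ) (hp : IsPMF pX)
    (hq : IsChannel q) (hW : IsChannel W) :
    -(2 * Fintype.card 𝒴) ≤ condKL pX q W := by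
  rw [← double_sum_const pX hp]
  refine Finset.sum_le_sum fun x _ => Finset.sum_le_sum fun y _ => ?_
  exact term_lb (hp.1 x) ((hq x).1 y) ((hW x).1 y) (entry_le_one (hW x) y)

lemma mutInfo_lb (pX : 𝒳 → ℝ) (q : 𝒳 → 𝒴 → ℝ) (hp : IsPMF pX)
    (hq : IsChannel q) :
    -(2 * Fintype.card 𝒴) ≤ mutInfo pX q := by
  rw [← double_sum_const pX hp]
  refine Finset.sum_le_sum fun x _ => Finset.sum_le_sum fun y _ => ?_
  refine term_lb (hp.1 x) ((hq x).1 y) ?_ ?_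
  · exact Finset.sum_nonneg fun x' _ => mul_nonneg (hp.1 x') ((hq x').1 y)
  · calc ∑ x', pX x' * q x' y ≤ ∑ x', pX x' :=
        Finset.sum_le_sum fun x' _ => by
          nlinarith [hp.1 x', (hq x').1 y, entry_le_one (hq x') y]
    _ = 1 := hp.2

lemma elem_lb (F : ℝ → ℝ) (hFmono : Monotone F) (R : ℝ) (pX : 𝒳 → ℝ)
    (q W : 𝒳 → 𝒴 → ℝ) (hp : IsPMF pX) (hq : IsChannel q) (hW : IsChannel W) :
    -(2 * Fintype.card 𝒴) + F (-(2 * Fintype.card 𝒴) - R) ≤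
      condKL pX q W + F (mutInfo pX q - R) := by
  have h1 := condKL_lb pX q W hp hq hW
  have h2 := mutInfo_lb pX q hp hq
  have h3 := hFmono (show -(2 * (Fintype.card 𝒴 : ℝ)) - R ≤ mutInfo pX q - R by linarith)
  linarith

lemma ErF_lb (F : ℝ → ℝ) (hFmono : Monotone F) (R : ℝ) (pX : 𝒳 → ℝ)
    (W : 𝒳 → 𝒴 → ℝ) (hp : IsPMF pX) (hW : IsChannel W) :
    -(2 * Fintype.card 𝒴) + F (-(2 * Fintype.card 𝒴) - R) ≤ ErF F R pX W := by
  refine le_csInf ⟨_, W, hW, rfl⟩ ?_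
  rintro v ⟨q, hq, rfl⟩
  exact elem_lb F hFmono R pX q W hp hq hW

end Bounds

/-- With `F^{L*}(t) = α - E_sp(R+t,pX,𝒲)` (equal to `-∞` when the
sphere-packing exponent is `+∞`), a continuous nondecreasing `F : ℝ → ℝ` satisfies
`E_{r,F}(R,pX,𝒲) ≥ α` if and only if `F` dominates `F^{L*}` pointwise. -/
theorem feasible_iff_dominates_FLstar {𝒳 𝒴 : Type*} [Fintype 𝒳] [Fintype 𝒴]
    (pX : 𝒳 → ℝ) (hpX : IsPMF pX)
    (𝒲 : Set (𝒳 → 𝒴 → ℝ)) (h𝒲ne : 𝒲.Nonempty) (h𝒲cpt : IsCompact 𝒲)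
    (h𝒲ch : ∀ p ∈ 𝒲, IsChannel p) (R α : ℝ)
    (F : ℝ → ℝ) (hFcont : Continuous F) (hFmono : Monotone F) :
    α ≤ ErFW F R pX 𝒲 ↔
      ∀ t : ℝ, (α : EReal) - EspEW (R + t) pX 𝒲 ≤ (F t : EReal) := by
  set c : ℝ := -(2 * Fintype.card 𝒴) + F (-(2 * Fintype.card 𝒴) - R) with hc
  constructor
  · intro h t
    -- reduce to a bound on EspEW
    have key : ((α - F t : ℝ) : EReal) ≤ EspEW (R + t) pX 𝒲 := by
      refine le_sInf ?_
      rintro v ⟨p, hpW, rfl⟩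
      refine le_sInf ?_
      rintro w ⟨q, hq, hqI, rfl⟩
      rw [EReal.coe_le_coe_iff]
      -- from h : α ≤ ErFW
      have hSbdd : BddBelow {v : ℝ | ∃ p ∈ 𝒲, v = ErF F R pX p} := by
        refine ⟨c, ?_⟩
        rintro v ⟨p', hp'W, rfl⟩
        exact ErF_lb F hFmono R pX p' hpX (h𝒲ch p' hp'W)
      have h1 : α ≤ ErF F R pX p :=
        le_trans h (csInf_le hSbdd ⟨p, hpW, rfl⟩)
      have hTbdd : BddBelow {v : ℝ | ∃ q : 𝒳 → 𝒴 → ℝ,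
          IsChannel q ∧ v = condKL pX q p + F (mutInfo pX q - R)} := by
        refine ⟨c, ?_⟩
        rintro v ⟨q', hq', rfl⟩
        exact elem_lb F hFmono R pX q' p hpX hq' (h𝒲ch p hpW)
      have h2 : α ≤ condKL pX q p + F (mutInfo pX q - R) :=
        le_trans h1 (csInf_le hTbdd ⟨q, hq, rfl⟩)
      have h3 : F (mutInfo pX q - R) ≤ F t := hFmono (by linarith)
      linarith
    calc (α : EReal) - EspEW (R + t) pX 𝒲
        ≤ (α : EReal) - ((α - F t : ℝ) : EReal) := EReal.sub_le_sub le_rfl key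
      _ = ((α - (α - F t) : ℝ) : EReal) := by norm_cast
      _ = ((F t : ℝ) : EReal) := by norm_num
  · intro h
    refine le_csInf ?_ ?_
    · obtain ⟨p, hpW⟩ := h𝒲ne
      exact ⟨_, p, hpW, rfl⟩
    rintro v ⟨p, hpW, rfl⟩
    refine le_csInf ⟨_, p, h𝒲ch p hpW, rfl⟩ ?_
    rintro w ⟨q, hq, rfl⟩
    set t : ℝ := mutInfo pX q - R with ht
    have hE : EspEW (R + t) pX 𝒲 ≤ ((condKL pX q p : ℝ) : EReal) := by
      refine le_trans (sInf_le ⟨p, hpW, rfl⟩) ?_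
      exact sInf_le ⟨q, hq, by rw [ht]; linarith, rfl⟩
    have h1 : (α : EReal) - ((condKL pX q p : ℝ) : EReal) ≤ ((F t : ℝ) : EReal) :=
      le_trans (EReal.sub_le_sub le_rfl hE) (h t)
    rw [← EReal.coe_sub, EReal.coe_le_coe_iff] at h1
    linarith
end

section
/- (Universal attainability of Forney's exponents.) Let W be a nonempty compact set of channels and p_X an input pmf such that for every p ∈ W the function R' ↦ E_sp(R', p_X, p) is real-valued, convex, nonincreasing and differentiable on an open interval containing [R, R+Δ], where Δ ≥ 0. Suppose λ > 0 satisfies, for every p ∈ W: λ ≥ −E_sp'(R, p_X, p), 1/λ ≥ −E_sp'(R+Δ, p_X, p), E_sp'(R, p_X, p) · E_sp'(R+Δ, p_X, p) ≤ 1, and R + Δ ≤ I(p_X, p). Then the single penalty function F(t) = Δ + λ|t|⁺ attains, simultaneously for every channel p ∈ W, the exponent pair E_{r,F}(R, p_X, p) = E_sp(R, p_X, p) + Δ and E_{r,|F^{-1}|⁺}(R, p_X, p) = E_sp(R+Δ, p_X, p), where |F^{-1}|⁺(t) = (1/λ)|t − Δ|⁺. -/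
open scoped BigOperators

open Real Set in
lemma convexOn_mul_logb : ConvexOn ℝ (Set.Ici (0:ℝ)) (fun t => t * Real.logb 2 t) := by
  have h := Real.convexOn_mul_log.smul (c := (Real.log 2)⁻¹) (by positivity)
  convert h using 2 with t
  · rfl
  · rfl
  simp [Real.logb, div_eq_inv_mul]
  ring

set_option linter.unusedSectionVars false
open Real Set in
lemma g2 {u₁ u₂ v₁ v₂ θ θ' : ℝ} (hu₁ : 0 ≤ u₁) (hu₂ : 0 ≤ u₂)
    (hv₁ : 0 ≤ v₁) (hv₂ : 0 ≤ v₂) (hz₁ : v₁ = 0 → u₁ = 0) (hz₂ : v₂ = 0 → u₂ = 0)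
    (hθ : 0 ≤ θ) (hθ' : 0 ≤ θ') (hsum : θ + θ' = 1) :
    (θ*u₁+θ'*u₂) * Real.logb 2 ((θ*u₁+θ'*u₂)/(θ*v₁+θ'*v₂)) ≤
      θ * (u₁ * Real.logb 2 (u₁/v₁)) + θ' * (u₂ * Real.logb 2 (u₂/v₂)) := by
  rcases eq_or_lt_of_le hθ with h0 | hθpos
  · have : θ' = 1 := by linarith
    simp [← h0, this]
  rcases eq_or_lt_of_le hθ' with h0' | hθ'pos
  · have : θ = 1 := by linarith
    simp [← h0', this]
  rcases eq_or_lt_of_le hv₁ with hv10 | hv1pos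
  · have hu10 : u₁ = 0 := hz₁ hv10.symm
    rcases eq_or_lt_of_le hv₂ with hv20 | hv2pos
    · have hu20 : u₂ = 0 := hz₂ hv20.symm
      simp [hu10, hu20, ← hv10, ← hv20]
    · rw [hu10, ← hv10]
      simp only [mul_zero, zero_add, zero_mul, zero_add, mul_zero]
      rw [mul_div_mul_left _ _ (ne_of_gt hθ'pos)]
      exact le_of_eq (by ring)
  rcases eq_or_lt_of_le hv₂ with hv20 | hv2pos
  · have hu20 : u₂ = 0 := hz₂ hv20.symm
    rw [hu20, ← hv20]
    simp only [mul_zero, add_zero, zero_mul]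
    rw [mul_div_mul_left _ _ (ne_of_gt hθpos)]
    exact le_of_eq (by ring)
  -- main case: v₁, v₂ > 0
  set B := θ*v₁+θ'*v₂ with hB
  have hBpos : 0 < B := by positivity
  have hw₁ : 0 ≤ θ*v₁/B := by positivity
  have hw₂ : 0 ≤ θ'*v₂/B := by positivity
  have hwsum : θ*v₁/B + θ'*v₂/B = 1 := by field_simp; exact hB.symm
  have key := convexOn_mul_logb.2 (mem_Ici.2 (div_nonneg hu₁ hv₁)) (mem_Ici.2 (div_nonneg hu₂ hv₂))
    hw₁ hw₂ hwsum
  simp only [smul_eq_mul] at key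
  have hcomb : θ*v₁/B * (u₁/v₁) + θ'*v₂/B * (u₂/v₂) = (θ*u₁+θ'*u₂)/B := by
    field_simp
  rw [hcomb] at key
  have key2 := mul_le_mul_of_nonneg_left key hBpos.le
  calc (θ*u₁+θ'*u₂) * Real.logb 2 ((θ*u₁+θ'*u₂)/B)
      = B * ((θ*u₁+θ'*u₂)/B * Real.logb 2 ((θ*u₁+θ'*u₂)/B)) := by
        rw [← mul_assoc, mul_div_cancel₀ _ (ne_of_gt hBpos)]
    _ ≤ B * (θ*v₁/B * (u₁/v₁ * Real.logb 2 (u₁/v₁)) + θ'*v₂/B * (u₂/v₂ * Real.logb 2 (u₂/v₂))) := key2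
    _ = θ * (u₁ * Real.logb 2 (u₁/v₁)) + θ' * (u₂ * Real.logb 2 (u₂/v₂)) := by
        field_simp

section Mix
variable {𝒳 𝒴 : Type*} [Fintype 𝒳] [Fintype 𝒴]

lemma isChannel_mix {q₁ q₂ : 𝒳 → 𝒴 → ℝ} (h₁ : IsChannel q₁) (h₂ : IsChannel q₂)
    {θ : ℝ} (h0 : 0 ≤ θ) (hθ1 : θ ≤ 1) :
    IsChannel (fun x y => θ * q₁ x y + (1-θ) * q₂ x y) := by
  intro x
  constructor
  · intro y
    have := (h₁ x).1 y
    have := (h₂ x).1 y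
    have : (0:ℝ) ≤ 1 - θ := by linarith
    positivity
  · have e1 := (h₁ x).2
    have e2 := (h₂ x).2
    simp only [Finset.sum_add_distrib, ← Finset.mul_sum, e1, e2]
    ring

lemma condKL_mix_le {pX : 𝒳 → ℝ} (hpX : ∀ x, 0 ≤ pX x) {q₁ q₂ W : 𝒳 → 𝒴 → ℝ}
    (hq₁ : IsChannel q₁) (hq₂ : IsChannel q₂) (hW : IsChannel W)
    {θ : ℝ} (h0 : 0 ≤ θ) (hθ1 : θ ≤ 1) :
    condKL pX (fun x y => θ * q₁ x y + (1-θ) * q₂ x y) W ≤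
      θ * condKL pX q₁ W + (1-θ) * condKL pX q₂ W := by
  have hθ' : (0:ℝ) ≤ 1 - θ := by linarith
  have step : ∀ x y,
      pX x * (θ * q₁ x y + (1-θ) * q₂ x y) *
        Real.logb 2 ((θ * q₁ x y + (1-θ) * q₂ x y) / W x y) ≤
      θ * (pX x * q₁ x y * Real.logb 2 (q₁ x y / W x y)) +
      (1-θ) * (pX x * q₂ x y * Real.logb 2 (q₂ x y / W x y)) := by
    intro x y
    rcases eq_or_lt_of_le ((hW x).1 y) with hw0 | hwpos
    · rw [← hw0]
      simp [div_zero]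
    · have hwne : W x y ≠ 0 := ne_of_gt hwpos
      have core := g2 ((hq₁ x).1 y) ((hq₂ x).1 y) hwpos.le hwpos.le
        (fun h => absurd h hwne) (fun h => absurd h hwne) h0 hθ' (by ring)
      have hden : θ * W x y + (1-θ) * W x y = W x y := by ring
      rw [hden] at core
      have := mul_le_mul_of_nonneg_left core (hpX x)
      nlinarith [this]
  calc condKL pX (fun x y => θ * q₁ x y + (1-θ) * q₂ x y) W
      ≤ ∑ x, ∑ y, (θ * (pX x * q₁ x y * Real.logb 2 (q₁ x y / W x y)) +
        (1-θ) * (pX x * q₂ x y * Real.logb 2 (q₂ x y / W x y))) := by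
        unfold condKL
        exact Finset.sum_le_sum fun x _ => Finset.sum_le_sum fun y _ => step x y
    _ = θ * condKL pX q₁ W + (1-θ) * condKL pX q₂ W := by
        unfold condKL
        simp [Finset.sum_add_distrib, Finset.mul_sum]

lemma mutInfo_mix_le {pX : 𝒳 → ℝ} (hpX : ∀ x, 0 ≤ pX x) {q₁ q₂ : 𝒳 → 𝒴 → ℝ}
    (hq₁ : IsChannel q₁) (hq₂ : IsChannel q₂)
    {θ : ℝ} (h0 : 0 ≤ θ) (hθ1 : θ ≤ 1) :
    mutInfo pX (fun x y => θ * q₁ x y + (1-θ) * q₂ x y) ≤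
      θ * mutInfo pX q₁ + (1-θ) * mutInfo pX q₂ := by
  have hθ' : (0:ℝ) ≤ 1 - θ := by linarith
  have hmarg : ∀ y : 𝒴, (∑ x', pX x' * (θ * q₁ x' y + (1-θ) * q₂ x' y)) =
      θ * (∑ x', pX x' * q₁ x' y) + (1-θ) * (∑ x', pX x' * q₂ x' y) := by
    intro y
    rw [Finset.mul_sum, Finset.mul_sum, ← Finset.sum_add_distrib]
    exact Finset.sum_congr rfl fun x _ => by ring
  have step : ∀ x y,
      pX x * (θ * q₁ x y + (1-θ) * q₂ x y) *
        Real.logb 2 ((θ * q₁ x y + (1-θ) * q₂ x y) /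
          (θ * (∑ x', pX x' * q₁ x' y) + (1-θ) * (∑ x', pX x' * q₂ x' y))) ≤
      θ * (pX x * q₁ x y * Real.logb 2 (q₁ x y / ∑ x', pX x' * q₁ x' y)) +
      (1-θ) * (pX x * q₂ x y * Real.logb 2 (q₂ x y / ∑ x', pX x' * q₂ x' y)) := by
    intro x y
    rcases eq_or_lt_of_le (hpX x) with hx0 | hxpos
    · rw [← hx0]
      simp
    · have hv₁ : (0:ℝ) ≤ ∑ x', pX x' * q₁ x' y :=
        Finset.sum_nonneg fun x' _ => mul_nonneg (hpX x') ((hq₁ x').1 y)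
      have hv₂ : (0:ℝ) ≤ ∑ x', pX x' * q₂ x' y :=
        Finset.sum_nonneg fun x' _ => mul_nonneg (hpX x') ((hq₂ x').1 y)
      have hz₁ : (∑ x', pX x' * q₁ x' y) = 0 → q₁ x y = 0 := by
        intro h
        have := (Finset.sum_eq_zero_iff_of_nonneg
          (fun x' _ => mul_nonneg (hpX x') ((hq₁ x').1 y))).1 h x (Finset.mem_univ x)
        rcases mul_eq_zero.1 this with h' | h'
        · exact absurd h' (ne_of_gt hxpos)
        · exact h'
      have hz₂ : (∑ x', pX x' * q₂ x' y) = 0 → q₂ x y = 0 := by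
        intro h
        have := (Finset.sum_eq_zero_iff_of_nonneg
          (fun x' _ => mul_nonneg (hpX x') ((hq₂ x').1 y))).1 h x (Finset.mem_univ x)
        rcases mul_eq_zero.1 this with h' | h'
        · exact absurd h' (ne_of_gt hxpos)
        · exact h'
      have core := g2 ((hq₁ x).1 y) ((hq₂ x).1 y) hv₁ hv₂ hz₁ hz₂ h0 hθ' (by ring)
      have := mul_le_mul_of_nonneg_left core (hpX x)
      nlinarith [this]
  calc mutInfo pX (fun x y => θ * q₁ x y + (1-θ) * q₂ x y)
      = ∑ x, ∑ y, pX x * (θ * q₁ x y + (1-θ) * q₂ x y) *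
          Real.logb 2 ((θ * q₁ x y + (1-θ) * q₂ x y) /
            (θ * (∑ x', pX x' * q₁ x' y) + (1-θ) * (∑ x', pX x' * q₂ x' y))) := by
        unfold mutInfo
        exact Finset.sum_congr rfl fun x _ => Finset.sum_congr rfl fun y _ => by rw [hmarg y]
    _ ≤ ∑ x, ∑ y, (θ * (pX x * q₁ x y * Real.logb 2 (q₁ x y / ∑ x', pX x' * q₁ x' y)) +
        (1-θ) * (pX x * q₂ x y * Real.logb 2 (q₂ x y / ∑ x', pX x' * q₂ x' y))) :=
        Finset.sum_le_sum fun x _ => Finset.sum_le_sum fun y _ => step x y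
    _ = θ * mutInfo pX q₁ + (1-θ) * mutInfo pX q₂ := by
        unfold mutInfo
        simp [Finset.sum_add_distrib, Finset.mul_sum]

end Mix

open Set in
lemma tangent_le {a b : ℝ} {f : ℝ → ℝ} (hconv : ConvexOn ℝ (Ioo a b) f)
    {s t : ℝ} (hs : s ∈ Ioo a b) (ht : t ∈ Ioo a b) (hst : s < t)
    (hd : DifferentiableAt ℝ f s) :
    f s + deriv f s * (t - s) ≤ f t := by
  have h := hconv.deriv_le_slope hs ht hst hd
  rw [slope_def_field] at h
  have hts : 0 < t - s := sub_pos.2 hst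
  have := (le_div_iff₀ hts).1 h
  linarith

section Esp
variable {𝒳 𝒴 : Type*} [Fintype 𝒳] [Fintype 𝒴]

lemma EspE_le_condKL {pX : 𝒳 → ℝ} {W q : 𝒳 → 𝒴 → ℝ} {R' : ℝ}
    (hq : IsChannel q) (hI : mutInfo pX q ≤ R') :
    EspE R' pX W ≤ (condKL pX q W : EReal) :=
  sInf_le ⟨q, hq, hI, rfl⟩

lemma exists_near {pX : 𝒳 → ℝ} {W : 𝒳 → 𝒴 → ℝ} {R' c : ℝ}
    (h : EspE R' pX W = (c : EReal)) {ε : ℝ} (hε : 0 < ε) :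
    ∃ q : 𝒳 → 𝒴 → ℝ, IsChannel q ∧ mutInfo pX q ≤ R' ∧ condKL pX q W < c + ε := by
  have hlt : EspE R' pX W < ((c + ε : ℝ) : EReal) := by
    rw [h]
    exact_mod_cast lt_add_of_pos_right c hε
  rw [EspE, sInf_lt_iff] at hlt
  obtain ⟨v, ⟨q, hq, hI, rfl⟩, hv⟩ := hlt
  exact ⟨q, hq, hI, by exact_mod_cast hv⟩

open Set in
/-- The key "global tangent" lower bound for channels with mutual information above `s`. -/
lemma star_bound {pX : 𝒳 → ℝ} (hpX : IsPMF pX) {p : 𝒳 → 𝒴 → ℝ} (hp : IsChannel p)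
    {a b : ℝ} {e : ℝ → ℝ}
    (he : ∀ R' ∈ Ioo a b, EspE R' pX p = (e R' : EReal))
    (hconv : ConvexOn ℝ (Ioo a b) e)
    (hdiff : ∀ R' ∈ Ioo a b, DifferentiableAt ℝ e R')
    {s : ℝ} (hs : s ∈ Ioo a b)
    {q : 𝒳 → 𝒴 → ℝ} (hq : IsChannel q) (hI : s < mutInfo pX q) :
    e s + deriv e s * (mutInfo pX q - s) ≤ condKL pX q p := by
  set I := mutInfo pX q with hIdef
  set D := condKL pX q p with hDdef
  set t := (s + min I b) / 2 with htdef
  have hsmin : s < min I b := lt_min hI hs.2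
  have hst : s < t := by
    rw [htdef]; linarith
  have htI : t < I := by
    have : t < min I b := by rw [htdef]; linarith
    exact lt_of_lt_of_le this (min_le_left _ _)
  have htb : t < b := by
    have : t < min I b := by rw [htdef]; linarith
    exact lt_of_lt_of_le this (min_le_right _ _)
  have hta : a < t := lt_trans hs.1 hst
  have ht : t ∈ Ioo a b := ⟨hta, htb⟩
  set θ := (t - s) / (I - s) with hθdef
  have hIs : 0 < I - s := sub_pos.2 hI
  have hθpos : 0 < θ := div_pos (sub_pos.2 hst) hIs
  have hθlt : θ < 1 := (div_lt_one hIs).2 (by linarith)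
  have hθI : θ * (I - s) = t - s := div_mul_cancel₀ _ (ne_of_gt hIs)
  refine le_of_forall_pos_le_add fun ε hε => ?_
  have hεθ : 0 < ε * θ := mul_pos hε hθpos
  obtain ⟨qs, hqs, hqsI, hqsD⟩ := exists_near (he s hs) hεθ
  set qθ : 𝒳 → 𝒴 → ℝ := fun x y => θ * q x y + (1-θ) * qs x y with hqθdef
  have hqθ : IsChannel qθ := isChannel_mix hq hqs hθpos.le hθlt.le
  have hIθ : mutInfo pX qθ ≤ t :=
    calc mutInfo pX qθ ≤ θ * I + (1-θ) * mutInfo pX qs :=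
          mutInfo_mix_le hpX.1 hq hqs hθpos.le hθlt.le
      _ ≤ θ * I + (1-θ) * s := by
          have : (0:ℝ) ≤ 1 - θ := by linarith
          nlinarith [hqsI]
      _ = t := by nlinarith [hθI]
  have hDθ : condKL pX qθ p ≤ θ * D + (1-θ) * condKL pX qs p :=
    condKL_mix_le hpX.1 hq hqs hp hθpos.le hθlt.le
  have het : e t ≤ condKL pX qθ p := by
    have := EspE_le_condKL (pX := pX) (W := p) hqθ hIθ
    rw [he t ht] at this
    exact_mod_cast this
  have htan : e s + deriv e s * (t - s) ≤ e t := tangent_le hconv hs ht hst (hdiff s hs)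
  have h1θ : (0:ℝ) ≤ 1 - θ := by linarith
  have hchain : e s + deriv e s * (t - s) ≤ θ * D + (1-θ) * (e s + ε * θ) := by
    calc e s + deriv e s * (t - s) ≤ condKL pX qθ p := le_trans htan het
      _ ≤ θ * D + (1-θ) * condKL pX qs p := hDθ
      _ ≤ θ * D + (1-θ) * (e s + ε * θ) := by nlinarith [hqsD.le]
  rw [← hθI] at hchain
  nlinarith [hchain, hθpos, hθlt]
end Esp
/-- universal attainability of Forney's exponents: If for every `p ∈ 𝒲`
the sphere-packing exponent `R' ↦ E_sp(R',pX,p)` (represented by `e p`) is real-valued,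
convex, nonincreasing and differentiable on an open interval `(a,b) ⊇ [R,R+Δ]`, and
`λ > 0` satisfies for every `p ∈ 𝒲`: `λ ≥ -E_sp'(R,pX,p)`, `1/λ ≥ -E_sp'(R+Δ,pX,p)`,
`E_sp'(R,pX,p)·E_sp'(R+Δ,pX,p) ≤ 1` and `R+Δ ≤ I(pX,p)`, then the single penalty
`F(t) = Δ + λ|t|⁺` attains, simultaneously for every `p ∈ 𝒲`,
`E_{r,F}(R,pX,p) = E_sp(R,pX,p) + Δ` and
`E_{r,|F⁻¹|⁺}(R,pX,p) = E_sp(R+Δ,pX,p)`, with `|F⁻¹|⁺(t) = (1/λ)|t-Δ|⁺`. -/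
theorem universal_attainability_Forney {𝒳 𝒴 : Type*} [Fintype 𝒳] [Fintype 𝒴]
    (pX : 𝒳 → ℝ) (hpX : IsPMF pX)
    (𝒲 : Set (𝒳 → 𝒴 → ℝ)) (h𝒲ne : 𝒲.Nonempty) (h𝒲cpt : IsCompact 𝒲)
    (h𝒲ch : ∀ p ∈ 𝒲, IsChannel p)
    (a b : ℝ) (e : (𝒳 → 𝒴 → ℝ) → ℝ → ℝ)
    (he : ∀ p ∈ 𝒲, ∀ R' ∈ Set.Ioo a b, EspE R' pX p = (e p R' : EReal))
    (hconv : ∀ p ∈ 𝒲, ConvexOn ℝ (Set.Ioo a b) (e p))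
    (hanti : ∀ p ∈ 𝒲, AntitoneOn (e p) (Set.Ioo a b))
    (hdiff : ∀ p ∈ 𝒲, ∀ R' ∈ Set.Ioo a b, DifferentiableAt ℝ (e p) R')
    (R Δ lam : ℝ) (hΔ : 0 ≤ Δ) (hJ : Set.Icc R (R + Δ) ⊆ Set.Ioo a b) (hlam : 0 < lam)
    (h1 : ∀ p ∈ 𝒲, -deriv (e p) R ≤ lam)
    (h2 : ∀ p ∈ 𝒲, -deriv (e p) (R + Δ) ≤ 1 / lam)
    (h3 : ∀ p ∈ 𝒲, deriv (e p) R * deriv (e p) (R + Δ) ≤ 1)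
    (h4 : ∀ p ∈ 𝒲, R + Δ ≤ mutInfo pX p) :
    ∀ p ∈ 𝒲,
      ErF (fun t : ℝ => Δ + lam * max t 0) R pX p = e p R + Δ
      ∧ ErF (fun t : ℝ => (1 / lam) * max (t - Δ) 0) R pX p = e p (R + Δ) := by
  intro p hp
  have hpch := h𝒲ch p hp
  have hRio : R ∈ Set.Ioo a b := hJ ⟨le_refl R, by linarith⟩
  have hRΔio : R + Δ ∈ Set.Ioo a b := hJ ⟨by linarith, le_refl _⟩
  constructor
  · -- first exponent
    have lb : ∀ v ∈ {v : ℝ | ∃ q : 𝒳 → 𝒴 → ℝ, IsChannel q ∧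
        v = condKL pX q p + (Δ + lam * max (mutInfo pX q - R) 0)}, e p R + Δ ≤ v := by
      rintro v ⟨q, hq, rfl⟩
      rcases le_or_gt (mutInfo pX q) R with hle | hlt
      · have h := EspE_le_condKL (W := p) hq hle
        rw [he p hp R hRio] at h
        have hD : e p R ≤ condKL pX q p := by exact_mod_cast h
        have hmax : max (mutInfo pX q - R) 0 = 0 := max_eq_right (by linarith)
        rw [hmax]
        linarith
      · have h := star_bound hpX hpch (he p hp) (hconv p hp) (hdiff p hp) hRio hq hlt
        have hmax : max (mutInfo pX q - R) 0 = mutInfo pX q - R := max_eq_left (by linarith)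
        rw [hmax]
        have h1' := h1 p hp
        have hpos : (0:ℝ) ≤ mutInfo pX q - R := by linarith
        nlinarith [mul_le_mul_of_nonneg_right h1' hpos]
    have hbdd : BddBelow {v : ℝ | ∃ q : 𝒳 → 𝒴 → ℝ, IsChannel q ∧
        v = condKL pX q p + (Δ + lam * max (mutInfo pX q - R) 0)} := ⟨e p R + Δ, lb⟩
    have hne : {v : ℝ | ∃ q : 𝒳 → 𝒴 → ℝ, IsChannel q ∧
        v = condKL pX q p + (Δ + lam * max (mutInfo pX q - R) 0)}.Nonempty :=
      ⟨_, p, hpch, rfl⟩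
    refine le_antisymm ?_ (le_csInf hne lb)
    refine le_of_forall_pos_le_add fun ε hε => ?_
    obtain ⟨q, hq, hqI, hqD⟩ := exists_near (he p hp R hRio) hε
    have hmax : max (mutInfo pX q - R) 0 = 0 := max_eq_right (by linarith)
    have hmem : condKL pX q p + (Δ + lam * max (mutInfo pX q - R) 0) ∈
        {v : ℝ | ∃ q : 𝒳 → 𝒴 → ℝ, IsChannel q ∧
          v = condKL pX q p + (Δ + lam * max (mutInfo pX q - R) 0)} := ⟨q, hq, rfl⟩
    have := csInf_le hbdd hmem
    rw [hmax] at this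
    calc ErF (fun t : ℝ => Δ + lam * max t 0) R pX p
        ≤ condKL pX q p + (Δ + lam * 0) := this
      _ ≤ e p R + Δ + ε := by linarith
  · -- second exponent
    have lb : ∀ v ∈ {v : ℝ | ∃ q : 𝒳 → 𝒴 → ℝ, IsChannel q ∧
        v = condKL pX q p + 1 / lam * max (mutInfo pX q - R - Δ) 0}, e p (R + Δ) ≤ v := by
      rintro v ⟨q, hq, rfl⟩
      rcases le_or_gt (mutInfo pX q) (R + Δ) with hle | hlt
      · have h := EspE_le_condKL (W := p) hq hle
        rw [he p hp (R + Δ) hRΔio] at h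
        have hD : e p (R + Δ) ≤ condKL pX q p := by exact_mod_cast h
        have hmax : max (mutInfo pX q - R - Δ) 0 = 0 := max_eq_right (by linarith)
        rw [hmax]
        have : (0:ℝ) < 1 / lam := by positivity
        nlinarith
      · have h := star_bound hpX hpch (he p hp) (hconv p hp) (hdiff p hp) hRΔio hq hlt
        have hmax : max (mutInfo pX q - R - Δ) 0 = mutInfo pX q - R - Δ :=
          max_eq_left (by linarith)
        rw [hmax]
        have h2' := h2 p hp
        have hpos : (0:ℝ) ≤ mutInfo pX q - (R + Δ) := by linarith
        have key := mul_le_mul_of_nonneg_right h2' hpos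
        nlinarith [key]
    have hbdd : BddBelow {v : ℝ | ∃ q : 𝒳 → 𝒴 → ℝ, IsChannel q ∧
        v = condKL pX q p + 1 / lam * max (mutInfo pX q - R - Δ) 0} := ⟨e p (R + Δ), lb⟩
    have hne : {v : ℝ | ∃ q : 𝒳 → 𝒴 → ℝ, IsChannel q ∧
        v = condKL pX q p + 1 / lam * max (mutInfo pX q - R - Δ) 0}.Nonempty :=
      ⟨_, p, hpch, rfl⟩
    refine le_antisymm ?_ (le_csInf hne lb)
    refine le_of_forall_pos_le_add fun ε hε => ?_
    obtain ⟨q, hq, hqI, hqD⟩ := exists_near (he p hp (R + Δ) hRΔio) hε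
    have hmax : max (mutInfo pX q - R - Δ) 0 = 0 := max_eq_right (by linarith)
    have hmem : condKL pX q p + 1 / lam * max (mutInfo pX q - R - Δ) 0 ∈
        {v : ℝ | ∃ q : 𝒳 → 𝒴 → ℝ, IsChannel q ∧
          v = condKL pX q p + 1 / lam * max (mutInfo pX q - R - Δ) 0} := ⟨q, hq, rfl⟩
    have := csInf_le hbdd hmem
    rw [hmax] at this
    calc ErF (fun t : ℝ => 1 / lam * max (t - Δ) 0) R pX p
        ≤ condKL pX q p + 1 / lam * 0 := this
      _ ≤ e p (R + Δ) + ε := by linarith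
end
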